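/- Let Λ be a finite alphabet, T a vector tree of infinite height, k and ℓ non-negative integers, X an ℓ-subspace, and E ⊆ W(ℓ) large in X. Then there exists a variable word f such that [f]_Λ ⊆ E ∩ [X]_Λ and the vector level subset ws(f) dominates T(k). -/

import Mathlib

set_option autoImplicit false

/-- A rooted, finitely branching, balanced tree of height `ω` with no maximal nodes,
modelled as a prefix-closed collection of finite sequences of natural numbers. -/
structure TreeT where
  mem : List ℕ → Prop
  root : mem []
  pref : ∀ s n, mem (s ++ [n]) → mem s
  finBranch : ∀ s, mem s → {n : ℕ | mem (s ++ [n])}.Finite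
  noMax : ∀ s, mem s → ∃ n, mem (s ++ [n])

variable {d : ℕ}

/-- Membership in the level product of a vector tree: all coordinates are nodes of the
respective trees and lie on a common level. -/
def InLP (V : Fin (d + 1) → TreeT) (t : Fin (d + 1) → List ℕ) : Prop :=
  (∀ i, (V i).mem (t i)) ∧ ∀ i, (t i).length = (t 0).length

/-- The level product `⊗T` of a vector tree. -/
def LP (V : Fin (d + 1) → TreeT) : Type :=
  {t : Fin (d + 1) → List ℕ // InLP V t}

/-- The level of an element of the level product. -/
def lev {V : Fin (d + 1) → TreeT} (t : LP V) : ℕ := (t.1 0).length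

/-- The coordinatewise (prefix) ordering on the level product. -/
def lpLE {V : Fin (d + 1) → TreeT} (t s : LP V) : Prop :=
  ∀ i, t.1 i <+: s.1 i

/-- The level set of a subset of the level product. -/
def levSet {V : Fin (d + 1) → TreeT} (A : Set (LP V)) : Set ℕ := lev '' A

/-- `t` is the minimum of `W` in the ordering of the level product. -/
def isMinOf {V : Fin (d + 1) → TreeT} (t : LP V) (W : Set (LP V)) : Prop :=
  t ∈ W ∧ ∀ s ∈ W, lpLE t s

/-- A (partial) word over the alphabet `Λ` on the level product: `some (.inl a)` is the
letter `a`, `some (.inr s)` is an occurrence of the variable `v_s`, and `none` means the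
point is outside the domain of the word. -/
abbrev WordFun (Λ : Type) {d : ℕ} (V : Fin (d + 1) → TreeT) : Type :=
  LP V → Option (Λ ⊕ LP V)

variable {Λ : Type} {d : ℕ} {V : Fin (d + 1) → TreeT}

/-- The set of variables occurring in a word. -/
def Vars (f : WordFun Λ V) : Set (LP V) := {s | ∃ t, f t = some (Sum.inr s)}

/-- The occurrence set of the variable `v_s` in `f`. -/
def occSet (f : WordFun Λ V) (s : LP V) : Set (LP V) := {t | f t = some (Sum.inr s)}

/-- `f` is a word on the interval of levels `[m, n)` of the level product. -/
def IsWordOn (f : WordFun Λ V) (m n : ℕ) : Prop :=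
  ∀ t, (f t).isSome ↔ (m ≤ lev t ∧ lev t < n)

/-- `f` is a constant word (no variables occur). -/
def IsConst (f : WordFun Λ V) : Prop := ∀ t s, f t ≠ some (Sum.inr s)

/-- `W(ℓ)`: the constant words `f` with `f = ∅` or `bt f = ℓ`. -/
def Wl (Λ : Type) {d : ℕ} (V : Fin (d + 1) → TreeT) (ℓ : ℕ) : Set (WordFun Λ V) :=
  {f | IsConst f ∧ ∃ n, IsWordOn f ℓ n}

/-- `f` is a variable word on `⊗T↾[m,n)`: its set of variables is the (nonempty) level
product of a vector level subset `ws(f)` of `T` (a "rectangular" set of points on a common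
level), each variable's occurrence set admits that variable's index as its minimum, and all
occurrence sets share a common level set. -/
def IsVWord (f : WordFun Λ V) (m n : ℕ) : Prop :=
  IsWordOn f m n ∧
  (Vars f).Nonempty ∧
  (∀ s ∈ Vars f, ∀ s' ∈ Vars f, lev s = lev s') ∧
  (∀ s ∈ Vars f, ∀ s' ∈ Vars f, ∀ i₀ : Fin (d + 1),
    ∃ s'' ∈ Vars f, (∀ i, i ≠ i₀ → s''.1 i = s.1 i) ∧ s''.1 i₀ = s'.1 i₀) ∧
  (∀ s ∈ Vars f, s ∈ occSet f s ∧ ∀ t ∈ occSet f s, lpLE s t) ∧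
  (∀ s ∈ Vars f, ∀ s' ∈ Vars f, levSet (occSet f s) = levSet (occSet f s'))

/-- The (componentwise) projections of `A` dominate the `k`-th level of the vector tree:
every node of `T_i(k)` has a successor among the `i`-th coordinates of members of `A`. -/
def DominatesLevel {d : ℕ} (V : Fin (d + 1) → TreeT) (A : Set (LP V)) (k : ℕ) : Prop :=
  ∀ i : Fin (d + 1), ∀ u : List ℕ, (V i).mem u → u.length = k → ∃ s ∈ A, u <+: s.1 i

/-- Substituting the letters prescribed by `a` for the variables of `f`. -/
def substW (f : WordFun Λ V) (a : LP V → Λ) : WordFun Λ V :=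
  fun t => (f t).map (Sum.elim Sum.inl (fun s => Sum.inl (a s)))

/-- The span `[f]_Λ` of a single variable word: all its substitution instances. -/
def spanWord (f : WordFun Λ V) : Set (WordFun Λ V) := {g | ∃ a : LP V → Λ, g = substW f a}

/-- The union of the words `h 0, ..., h (q-1)` (with pairwise disjoint domains). -/
def unionMany (h : ℕ → WordFun Λ V) (q : ℕ) : WordFun Λ V :=
  fun t => (List.range q).findSome? (fun i => h i t)

/-- The union of two words with disjoint domains. -/
def wunion (f g : WordFun Λ V) : WordFun Λ V :=
  fun t => match f t with
  | some x => some x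
  | none => g t

/-- The span of the finite initial segment `F 0, ..., F (q-1)`:
all unions of substitution instances. -/
def spanFin (F : ℕ → WordFun Λ V) (q : ℕ) : Set (WordFun Λ V) :=
  {g | ∃ h : ℕ → WordFun Λ V, (∀ i, i < q → h i ∈ spanWord (F i)) ∧ g = unionMany h q}

/-- The span `[X]_Λ` of an infinite sequence of words. -/
def spanSeq (F : ℕ → WordFun Λ V) : Set (WordFun Λ V) :=
  ⋃ q ∈ {q : ℕ | 0 < q}, spanFin F q

/-- A `(k, ℓ)`-subspace: an infinite compatible sequence of variable words, the `i`-th one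
living on `[e i, e (i+1))` with `e 0 = ℓ`, whose variable supports `ws(f_i)` dominate
`T(k + i)`.  An `ℓ`-subspace is a `(k, ℓ)`-subspace for some `k`, and a subspace is a
`(0, 0)`-subspace. -/
structure SubspaceS (Λ : Type) {d : ℕ} (V : Fin (d + 1) → TreeT) (k ℓ : ℕ) where
  F : ℕ → WordFun Λ V
  e : ℕ → ℕ
  e0 : e 0 = ℓ
  vword : ∀ i, IsVWord (F i) (e i) (e (i + 1))
  dom : ∀ i, DominatesLevel V (Vars (F i)) (k + i)

/-- The tail of a subspace past its first `q` words: a `(k+q, e q)`-subspace. -/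
def SubspaceS.tail {k ℓ : ℕ} (X : SubspaceS Λ V k ℓ) (q : ℕ) :
    SubspaceS Λ V (k + q) (X.e q) where
  F := fun i => X.F (q + i)
  e := fun i => X.e (q + i)
  e0 := rfl
  vword := fun i => X.vword (q + i)
  dom := fun i => by simpa [Nat.add_assoc] using X.dom (q + i)

/-- `E ⊆ W(ℓ)` is large in the `ℓ`-subspace `X`: `E` meets the span of every further
`ℓ`-subspace of `X`. -/
def LargeIn {k ℓ : ℕ} (E : Set (WordFun Λ V)) (X : SubspaceS Λ V k ℓ) : Prop :=
  ∀ (k' : ℕ) (Y : SubspaceS Λ V k' ℓ),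
    spanSeq Y.F ⊆ spanSeq X.F → (E ∩ spanSeq Y.F).Nonempty


/-! ### Auxiliary development -/

section Aux

variable {Λ : Type} {d : ℕ} {V : Fin (d + 1) → TreeT}

/-- The root of the level product. -/
def rootLP (V : Fin (d + 1) → TreeT) : LP V :=
  ⟨fun _ => [], fun i => (V i).root, fun _ => rfl⟩

lemma lenCoord (s : LP V) (i : Fin (d + 1)) : (s.1 i).length = lev s := s.2.2 i

lemma lpLE_trans {a b c : LP V} (h : lpLE a b) (h' : lpLE b c) : lpLE a c :=
  fun i => (h i).trans (h' i)

lemma lpLE_eq_of_lev {a b : LP V} (h : lpLE a b) (hl : lev b ≤ lev a) : a = b := by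
  refine Subtype.ext (funext fun i => ?_)
  have := h i
  exact List.IsPrefix.eq_of_length_le this (by rw [lenCoord, lenCoord]; exact hl)

/-- Extend a node of a tree to any higher level. -/
lemma TreeT.extend (T : TreeT) {u : List ℕ} (hu : T.mem u) :
    ∀ L, u.length ≤ L → ∃ v, T.mem v ∧ v.length = L ∧ u <+: v := by
  intro L
  induction L with
  | zero => intro h; exact ⟨u, hu, Nat.le_zero.1 h, List.prefix_refl u⟩
  | succ L ih =>
    intro h
    rcases Nat.lt_or_ge u.length (L+1) with h' | h'
    · obtain ⟨v, hv, hvl, huv⟩ := ih (Nat.lt_succ_iff.1 h')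
      obtain ⟨n, hn⟩ := T.noMax v hv
      exact ⟨v ++ [n], hn, by simp [hvl], huv.trans (List.prefix_append v [n])⟩
    · exact ⟨u, hu, le_antisymm h h', List.prefix_refl u⟩

/-- The levels of a tree are finite. -/
lemma TreeT.level_finite (T : TreeT) : ∀ L, {u : List ℕ | T.mem u ∧ u.length = L}.Finite := by
  intro L
  induction L with
  | zero =>
    refine Set.Finite.subset (Set.finite_singleton ([] : List ℕ)) ?_
    rintro u ⟨-, h2⟩; simp [List.length_eq_zero_iff.1 h2]
  | succ L ih =>
    have : {u : List ℕ | T.mem u ∧ u.length = L + 1} ⊆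
        ⋃ v ∈ {u : List ℕ | T.mem u ∧ u.length = L},
          (fun n => v ++ [n]) '' {n : ℕ | T.mem (v ++ [n])} := by
      rintro u ⟨hu, hl⟩
      have hne : u ≠ [] := by intro h; simp [h] at hl
      have hu' : u = u.dropLast ++ [u.getLast hne] := (List.dropLast_append_getLast hne).symm
      have hm : T.mem (u.dropLast ++ [u.getLast hne]) := hu' ▸ hu
      have hlen : u.dropLast.length = L := by
        have : u.dropLast.length = u.length - 1 := List.length_dropLast; omega
      exact Set.mem_biUnion (⟨T.pref _ _ hm, hlen⟩ : u.dropLast ∈ {u : List ℕ | T.mem u ∧ u.length = L}) ⟨u.getLast hne, hm, hu'.symm⟩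
    exact Set.Finite.subset (Set.Finite.biUnion ih (fun v hv => Set.Finite.image _ (T.finBranch v hv.1))) this

lemma LP.level_finite (V : Fin (d + 1) → TreeT) (L : ℕ) :
    {s : LP V | lev s = L}.Finite := by
  have h1 : (Set.univ.pi fun i : Fin (d+1) => {u : List ℕ | (V i).mem u ∧ u.length = L}).Finite :=
    Set.Finite.pi fun i => (V i).level_finite L
  have h2 : Subtype.val '' {s : LP V | lev s = L} ⊆
      Set.univ.pi fun i : Fin (d+1) => {u : List ℕ | (V i).mem u ∧ u.length = L} := by
    rintro x ⟨s, hs, rfl⟩ i -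
    exact ⟨s.2.1 i, (lenCoord s i).trans hs⟩
  have h3 : (Subtype.val '' {s : LP V | lev s = L}).Finite := h1.subset h2
  exact Set.Finite.of_finite_image h3 (Set.injOn_of_injective Subtype.val_injective)

end Aux

section Words

variable {Λ : Type} {d : ℕ} {V : Fin (d + 1) → TreeT}

lemma substW_isSome (f : WordFun Λ V) (a : LP V → Λ) (t : LP V) :
    (substW f a t).isSome = (f t).isSome := by
  unfold substW; cases f t <;> rfl

lemma substW_wordOn {f : WordFun Λ V} {m n : ℕ} (h : IsWordOn f m n) (a : LP V → Λ) :
    IsWordOn (substW f a) m n := by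
  intro t; rw [substW_isSome]; exact h t

lemma substW_isConst (f : WordFun Λ V) (a : LP V → Λ) : IsConst (substW f a) := by
  intro t s h
  unfold substW at h
  cases hf : f t with
  | none => rw [hf] at h; simp at h
  | some v => rw [hf] at h; cases v <;> simp at h

lemma substW_congr {f : WordFun Λ V} {a a' : LP V → Λ}
    (h : ∀ s ∈ Vars f, a s = a' s) : substW f a = substW f a' := by
  funext t
  unfold substW
  cases hf : f t with
  | none => rfl
  | some v =>
    cases v with
    | inl b => rfl
    | inr s => simp only [Option.map_some, Sum.elim_inr]; rw [h s ⟨t, hf⟩]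

lemma substW_const_eq {f : WordFun Λ V} (h : IsConst f) (a : LP V → Λ) :
    substW f a = f := by
  funext t
  unfold substW
  cases hf : f t with
  | none => rfl
  | some v =>
    cases v with
    | inl b => rfl
    | inr s => exact absurd hf (h t s)

lemma substW_wunion (f g : WordFun Λ V) (a : LP V → Λ) :
    substW (wunion f g) a = wunion (substW f a) (substW g a) := by
  funext t
  simp only [substW, wunion]
  cases hf : f t <;> simp [hf]

lemma findSome?_map_comm {ι β γ : Type*} (L : List ι) (h : ι → Option β) (g : β → γ) :
    (L.findSome? h).map g = L.findSome? (fun i => (h i).map g) := by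
  induction L with
  | nil => rfl
  | cons a L ih =>
    rw [List.findSome?_cons, List.findSome?_cons]
    cases h a <;> simp [ih]

lemma substW_unionMany (H : ℕ → WordFun Λ V) (q : ℕ) (a : LP V → Λ) :
    substW (unionMany H q) a = unionMany (fun j => substW (H j) a) q := by
  funext t
  unfold substW unionMany
  exact findSome?_map_comm _ _ _

lemma substW_mem_spanFin (F : ℕ → WordFun Λ V) (q : ℕ) (β : LP V → Λ) :
    substW (unionMany F q) β ∈ spanFin F q :=
  ⟨fun j => substW (F j) β, fun i _ => ⟨β, rfl⟩, substW_unionMany F q β⟩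

lemma unionMany_succ (h : ℕ → WordFun Λ V) (q : ℕ) :
    unionMany h (q + 1) = wunion (unionMany h q) (h q) := by
  funext t
  simp only [unionMany, wunion]
  rw [List.range_succ, List.findSome?_append]
  rcases hq : List.findSome? (fun i => h i t) (List.range q) with _ | v
  · simp [hq, List.findSome?_cons, Option.or]
    cases h q t <;> simp
  · simp [hq, Option.or]

lemma unionMany_congr {h h' : ℕ → WordFun Λ V} {q : ℕ}
    (he : ∀ i < q, h i = h' i) : unionMany h q = unionMany h' q := by
  funext t
  unfold unionMany
  have : ∀ (L : List ℕ) (f g : ℕ → Option (Λ ⊕ LP V)), (∀ i ∈ L, f i = g i) →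
      L.findSome? f = L.findSome? g := by
    intro L
    induction L with
    | nil => intro f g _; rfl
    | cons a L ih =>
      intro f g hfg
      rw [List.findSome?_cons, List.findSome?_cons, hfg a List.mem_cons_self,
        ih f g (fun i hi => hfg i (List.mem_cons_of_mem a hi))]
  exact this _ _ _ (fun i hi => by rw [he i (List.mem_range.1 hi)])

section Sub

variable {Λ : Type} {d : ℕ} {V : Fin (d + 1) → TreeT}

lemma dominates_mono {A : Set (LP V)} {K k : ℕ}
    (h : DominatesLevel V A K) (hk : k ≤ K) : DominatesLevel V A k := by
  intro i u hu hlen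
  obtain ⟨v, hv, hvl, huv⟩ := (V i).extend hu K (by omega)
  obtain ⟨s, hs, hvs⟩ := h i v hv hvl
  exact ⟨s, hs, huv.trans hvs⟩

/-- Variable words are rectangles: any mixed tuple of coordinates of variables is a variable. -/
lemma rect_mem {f : WordFun Λ V} {m n : ℕ} (hv : IsVWord f m n) (x : LP V)
    (hx : ∀ i, ∃ s ∈ Vars f, x.1 i = s.1 i) : x ∈ Vars f := by
  obtain ⟨-, ⟨s₀, hs₀⟩, -, hex, -, -⟩ := hv
  have main : ∀ N, N ≤ d + 1 → ∃ s ∈ Vars f, ∀ i : Fin (d+1), (i : ℕ) < N → s.1 i = x.1 i := by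
    intro N
    induction N with
    | zero => intro _; exact ⟨s₀, hs₀, fun i hi => absurd hi (Nat.not_lt_zero _)⟩
    | succ N ih =>
      intro hN
      obtain ⟨s, hs, hsx⟩ := ih (by omega)
      obtain ⟨w, hw, hwx⟩ := hx ⟨N, hN⟩
      obtain ⟨s'', hs'', h1, h2⟩ := hex s hs w hw ⟨N, hN⟩
      refine ⟨s'', hs'', fun i hi => ?_⟩
      rcases eq_or_ne i ⟨N, hN⟩ with rfl | hne
      · rw [h2, ← hwx]
      · rw [h1 i hne]
        exact hsx i (by
          have : (i : ℕ) ≠ N := fun hc => hne (Fin.ext hc)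
          omega)
  obtain ⟨s, hs, hsx⟩ := main (d+1) le_rfl
  have : s = x := Subtype.ext (funext fun i => hsx i i.isLt)
  exact this ▸ hs

lemma vars_same_lev {f : WordFun Λ V} {m n : ℕ} (hv : IsVWord f m n)
    {s s' : LP V} (hs : s ∈ Vars f) (hs' : s' ∈ Vars f) : lev s = lev s' :=
  hv.2.2.1 s hs s' hs'

lemma vars_finite {f : WordFun Λ V} {m n : ℕ} (hv : IsVWord f m n) :
    (Vars f).Finite := by
  obtain ⟨s₀, hs₀⟩ := hv.2.1
  exact (LP.level_finite V (lev s₀)).subset fun s hs => vars_same_lev hv hs hs₀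

lemma spanWord_finite [Finite Λ] [Nonempty Λ] {f : WordFun Λ V}
    (hfin : (Vars f).Finite) : (spanWord f).Finite := by
  classical
  haveI := hfin.to_subtype
  have : spanWord f ⊆ Set.range (fun a : ↥(Vars f) → Λ =>
      substW f (fun s => if h : s ∈ Vars f then a ⟨s, h⟩ else Classical.arbitrary Λ)) := by
    rintro g ⟨a, rfl⟩
    refine ⟨fun s => a s.1, ?_⟩
    refine substW_congr fun s hs => ?_
    rw [dif_pos hs]
  exact (Set.finite_range _).subset this

variable {kX ℓ : ℕ} (X : SubspaceS Λ V kX ℓ)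

lemma mem_vars_lev {j : ℕ} {s : LP V} (hs : s ∈ Vars (X.F j)) :
    X.e j ≤ lev s ∧ lev s < X.e (j + 1) := by
  have h1 := (X.vword j).2.2.2.2.1 s hs
  have h2 : (X.F j s).isSome := by rw [h1.1]; rfl
  exact ((X.vword j).1 s).1 h2

lemma e_lt (j : ℕ) : X.e j < X.e (j + 1) := by
  obtain ⟨s, hs⟩ := (X.vword j).2.1
  have := mem_vars_lev X hs
  omega

lemma e_mono : ∀ {a b : ℕ}, a ≤ b → X.e a ≤ X.e b := by
  intro a b h
  induction b with
  | zero => simp_all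
  | succ b ih =>
    rcases Nat.lt_or_ge a (b+1) with h' | h'
    · exact le_trans (ih (by omega)) (le_of_lt (e_lt X b))
    · have : a = b + 1 := by omega
      simp [this]

lemma e_zero_le (j : ℕ) : ℓ ≤ X.e j := by
  have := e_mono X (Nat.zero_le j)
  rw [X.e0] at this
  exact this

lemma block_unique {j j' x : ℕ} (h : X.e j ≤ x) (h2 : x < X.e (j+1))
    (h3 : X.e j' ≤ x) (h4 : x < X.e (j'+1)) : j = j' := by
  by_contra hne
  rcases Nat.lt_or_ge j j' with hlt | hge
  · have := e_mono X (show j + 1 ≤ j' by omega); omega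
  · have hlt : j' < j := by omega
    have := e_mono X (show j' + 1 ≤ j by omega); omega

lemma vars_block_unique {j j' : ℕ} {s : LP V}
    (h : s ∈ Vars (X.F j)) (h' : s ∈ Vars (X.F j')) : j = j' := by
  have h1 := mem_vars_lev X h
  have h2 := mem_vars_lev X h'
  exact block_unique X h1.1 h1.2 h2.1 h2.2

lemma blockOf {x B : ℕ} (h1 : ℓ ≤ x) (h2 : x < X.e B) :
    ∃ j < B, X.e j ≤ x ∧ x < X.e (j + 1) := by
  induction B with
  | zero =>
    exfalso
    have h0 := X.e0
    omega
  | succ B ih =>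
    rcases Nat.lt_or_ge x (X.e B) with h' | h'
    · obtain ⟨j, hj, hx⟩ := ih h'
      exact ⟨j, by omega, hx⟩
    · exact ⟨B, by omega, h', h2⟩

lemma F_none_outside {j : ℕ} {t : LP V} (h : lev t < X.e j ∨ X.e (j+1) ≤ lev t) :
    X.F j t = none := by
  rw [← Option.not_isSome_iff_eq_none]
  intro hs
  have := ((X.vword j).1 t).1 hs
  omega

lemma UM_eq {j q : ℕ} {t : LP V} (hj : j < q) (h1 : X.e j ≤ lev t) (h2 : lev t < X.e (j+1)) :
    unionMany X.F q t = X.F j t := by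
  induction q with
  | zero => omega
  | succ q ih =>
    have hsucc : unionMany X.F (q+1) t = wunion (unionMany X.F q) (X.F q) t := by
      rw [unionMany_succ]
    rw [hsucc]
    unfold wunion
    rcases Nat.lt_or_ge j q with h' | h'
    · have hsome : (unionMany X.F q t).isSome := by
        rw [ih h']
        exact ((X.vword j).1 t).2 ⟨h1, h2⟩
      rcases Option.isSome_iff_exists.1 hsome with ⟨v, hv⟩
      rw [hv]
      show some v = X.F j t
      rw [← ih h', hv]
    · have hjq : j = q := by omega
      have hnone : unionMany X.F q t = none := by
        unfold unionMany
        rw [List.findSome?_eq_none_iff]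
        intro i hi
        refine F_none_outside X (Or.inr (le_trans (e_mono X ?_) h1))
        have := List.mem_range.1 hi
        omega
      rw [hnone, hjq]

lemma UM_none_low {q : ℕ} {t : LP V} (h : lev t < ℓ) : unionMany X.F q t = none := by
  unfold unionMany
  rw [List.findSome?_eq_none_iff]
  intro i _
  exact F_none_outside X (Or.inl (lt_of_lt_of_le h (e_zero_le X i)))

lemma UM_none_high {q : ℕ} {t : LP V} (h : X.e q ≤ lev t) : unionMany X.F q t = none := by
  unfold unionMany
  rw [List.findSome?_eq_none_iff]
  intro i hi
  exact F_none_outside X (Or.inr (le_trans (e_mono X (List.mem_range.1 hi)) h))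

lemma UM_isSome {q : ℕ} {t : LP V} :
    (unionMany X.F q t).isSome ↔ ℓ ≤ lev t ∧ lev t < X.e q := by
  constructor
  · intro hs
    by_contra hc
    rcases not_and_or.1 hc with h | h
    · rw [UM_none_low X (by omega)] at hs; simp at hs
    · rw [UM_none_high X (by omega)] at hs; simp at hs
  · rintro ⟨h1, h2⟩
    obtain ⟨j, hj, hx1, hx2⟩ := blockOf X h1 h2
    rw [UM_eq X hj hx1 hx2]
    exact ((X.vword j).1 t).2 ⟨hx1, hx2⟩

end Sub

section MergeSpan

variable {Λ : Type} {d : ℕ} {V : Fin (d + 1) → TreeT}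

/-- Restriction of a word to levels `≥ c`. -/
def Restr (c : ℕ) (f : WordFun Λ V) : WordFun Λ V := fun t => if c ≤ lev t then f t else none

lemma wunion_none_right (f g : WordFun Λ V) (t : LP V) (h : g t = none) :
    wunion f g t = f t := by
  unfold wunion; cases hf : f t <;> simp [hf, h]

lemma wunion_none_left (f g : WordFun Λ V) (t : LP V) (h : f t = none) :
    wunion f g t = g t := by
  unfold wunion; rw [h]

variable {kX ℓ : ℕ} (X : SubspaceS Λ V kX ℓ)

lemma merge_eq {P B : ℕ} (hPB : P ≤ B) (β β' : LP V → Λ) :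
    wunion (substW (unionMany X.F P) β) (Restr (X.e P) (substW (unionMany X.F B) β'))
      = substW (unionMany X.F B) (fun s => if lev s < X.e P then β s else β' s) := by
  funext t
  rcases Nat.lt_or_ge (lev t) (X.e P) with hP | hP
  · rw [wunion_none_right _ _ _ (by unfold Restr; rw [if_neg (by omega)])]
    rcases Nat.lt_or_ge (lev t) ℓ with hl | hl
    · unfold substW
      rw [UM_none_low X hl, UM_none_low X hl]
      rfl
    · obtain ⟨j, hj, h1, h2⟩ := blockOf X hl hP
      unfold substW
      rw [UM_eq X hj h1 h2, UM_eq X (by omega) h1 h2]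
      cases hf : X.F j t with
      | none => rfl
      | some v =>
        cases v with
        | inl b => rfl
        | inr s =>
          simp only [Option.map_some, Sum.elim_inr]
          have hs : s ∈ Vars (X.F j) := ⟨t, hf⟩
          have := (mem_vars_lev X hs).2
          have : lev s < X.e P := lt_of_lt_of_le this (e_mono X (by omega))
          rw [if_pos this]
  · rw [wunion_none_left _ _ _ (by
      unfold substW
      rw [UM_none_high X hP]
      rfl)]
    unfold Restr
    rw [if_pos hP]
    rcases Nat.lt_or_ge (lev t) (X.e B) with hB | hB
    · obtain ⟨j, hj, h1, h2⟩ := blockOf X (le_trans (e_zero_le X P) hP) hB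
      unfold substW
      rw [UM_eq X hj h1 h2]
      cases hf : X.F j t with
      | none => rfl
      | some v =>
        cases v with
        | inl b => rfl
        | inr s =>
          simp only [Option.map_some, Sum.elim_inr]
          have hs : s ∈ Vars (X.F j) := ⟨t, hf⟩
          have hsl := (mem_vars_lev X hs).1
          have hPj : P ≤ j := by
            by_contra hc
            have := e_mono X (show j + 1 ≤ P by omega)
            omega
          have : ¬ lev s < X.e P := by
            have := e_mono X hPj
            omega
          rw [if_neg this]
    · unfold substW
      rw [UM_none_high X hB]
      rfl

lemma spanFin_zero (F : ℕ → WordFun Λ V) :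
    spanFin F 0 = {(fun _ => none : WordFun Λ V)} := by
  ext g
  constructor
  · rintro ⟨h, -, rfl⟩
    rfl
  · rintro rfl
    exact ⟨fun _ _ => none, fun i hi => absurd hi (Nat.not_lt_zero i), rfl⟩

lemma spanFin_decomp {F : ℕ → WordFun Λ V} {q : ℕ} {w : WordFun Λ V}
    (h : w ∈ spanFin F (q + 1)) :
    ∃ w' ∈ spanFin F q, ∃ a : LP V → Λ, w = wunion w' (substW (F q) a) := by
  obtain ⟨h', hh, rfl⟩ := h
  obtain ⟨a, ha⟩ := hh q (Nat.lt_succ_self q)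
  exact ⟨unionMany h' q, ⟨h', fun i hi => hh i (by omega), rfl⟩, a,
    by rw [unionMany_succ, ha]⟩

lemma spanFin_congr {F F' : ℕ → WordFun Λ V} {q : ℕ} (he : ∀ i < q, F i = F' i) :
    spanFin F q = spanFin F' q := by
  ext g
  constructor <;> rintro ⟨h, hh, rfl⟩
  · exact ⟨h, fun i hi => by rw [← he i hi]; exact hh i hi, rfl⟩
  · exact ⟨h, fun i hi => by rw [he i hi]; exact hh i hi, rfl⟩

lemma spanFin_finite [Finite Λ] [Nonempty Λ] {F : ℕ → WordFun Λ V}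
    (hv : ∀ i, ∃ m n, IsVWord (F i) m n) : ∀ q, (spanFin F q).Finite := by
  intro q
  induction q with
  | zero => rw [spanFin_zero]; exact Set.finite_singleton _
  | succ q ih =>
    have hsub : spanFin F (q+1) ⊆
        (fun p : WordFun Λ V × WordFun Λ V => wunion p.1 p.2) ''
          (spanFin F q ×ˢ spanWord (F q)) := by
      intro w hw
      obtain ⟨w', hw', a, rfl⟩ := spanFin_decomp hw
      exact ⟨(w', substW (F q) a), ⟨hw', a, rfl⟩, rfl⟩
    obtain ⟨m, n, hmn⟩ := hv q
    exact ((ih.prod (spanWord_finite (vars_finite hmn))).image _).subset hsub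

end MergeSpan

section Chain

variable {Λ : Type} {d : ℕ} {V : Fin (d + 1) → TreeT}
variable {kX ℓ : ℕ} (X : SubspaceS Λ V kX ℓ)

lemma prefix_eq_of_length {α : Type*} {l₁ l₂ L : List α} (h1 : l₁ <+: L) (h2 : l₂ <+: L)
    (hl : l₁.length = l₂.length) : l₁ = l₂ := by
  rw [List.prefix_iff_eq_take] at h1 h2
  rw [h1, h2, hl]

lemma chain_step (j : ℕ) :
    ∃ p : ℕ × (LP V → LP V), j < p.1 ∧
      (∀ s ∈ Vars (X.F j), p.2 s ∈ Vars (X.F p.1) ∧ lpLE s (p.2 s)) ∧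
      (∀ s ∈ Vars (X.F j), ∀ s' ∈ Vars (X.F j), ∀ i, s.1 i = s'.1 i →
        (p.2 s).1 i = (p.2 s').1 i) := by
  classical
  set j' := j + 1 + X.e (j + 1) with hj'
  have hdom : DominatesLevel V (Vars (X.F j')) (kX + j') := X.dom j'
  -- choice function on coordinates
  set cho : Fin (d+1) → List ℕ → List ℕ := fun i u =>
    if h : ∃ w, w ∈ Vars (X.F j') ∧ u <+: w.1 i then h.choose.1 i else [] with hcho
  have key : ∀ s ∈ Vars (X.F j), ∀ i : Fin (d+1),
      ∃ w, w ∈ Vars (X.F j') ∧ s.1 i <+: w.1 i := by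
    intro s hs i
    have hlev : lev s ≤ kX + j' := by
      have := (mem_vars_lev X hs).2
      omega
    obtain ⟨w, hw, hpre⟩ := dominates_mono hdom hlev i (s.1 i) (s.2.1 i) (lenCoord s i)
    exact ⟨w, hw, hpre⟩
  have choP : ∀ s ∈ Vars (X.F j), ∀ i : Fin (d+1),
      ∃ w, w ∈ Vars (X.F j') ∧ cho i (s.1 i) = w.1 i ∧ s.1 i <+: cho i (s.1 i) := by
    intro s hs i
    have h := key s hs i
    rw [hcho]
    simp only [dif_pos h]
    exact ⟨h.choose, h.choose_spec.1, rfl, h.choose_spec.2⟩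
  have inlp : ∀ s ∈ Vars (X.F j), InLP V (fun i => cho i (s.1 i)) := by
    intro s hs
    constructor
    · intro i
      obtain ⟨w, hw, he, -⟩ := choP s hs i
      show (V i).mem (cho i (s.1 i))
      rw [he]
      exact w.2.1 i
    · intro i
      obtain ⟨w, hw, he, -⟩ := choP s hs i
      obtain ⟨w0, hw0, he0, -⟩ := choP s hs 0
      show (cho i (s.1 i)).length = (cho 0 (s.1 0)).length
      rw [he, he0, lenCoord, lenCoord]
      exact vars_same_lev (X.vword j') hw hw0
  set lift : LP V → LP V := fun s =>
    if h : InLP V (fun i => cho i (s.1 i)) then ⟨fun i => cho i (s.1 i), h⟩ else s with hlift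
  refine ⟨(j', lift), by omega, ?_, ?_⟩
  · intro s hs
    have hin := inlp s hs
    have hval : lift s = ⟨fun i => cho i (s.1 i), hin⟩ := by rw [hlift]; exact dif_pos hin
    show lift s ∈ Vars (X.F j') ∧ lpLE s (lift s)
    constructor
    · rw [hval]
      refine rect_mem (X.vword j') _ (fun i => ?_)
      obtain ⟨w, hw, he, -⟩ := choP s hs i
      exact ⟨w, hw, he⟩
    · intro i
      rw [hval]
      exact (choP s hs i).choose_spec.2.2
  · intro s hs s' hs' i hi
    have h1 : lift s = ⟨fun i => cho i (s.1 i), inlp s hs⟩ := by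
      rw [hlift]; exact dif_pos (inlp s hs)
    have h2 : lift s' = ⟨fun i => cho i (s'.1 i), inlp s' hs'⟩ := by
      rw [hlift]; exact dif_pos (inlp s' hs')
    show (lift s).1 i = (lift s').1 i
    rw [h1, h2]
    show cho i (s.1 i) = cho i (s'.1 i)
    rw [hi]

/-- A coherent chain of rectangles above the variables of block `j₀`. -/
lemma chain (j₀ : ℕ) :
    ∃ (blk : ℕ → ℕ) (Emb : ℕ → LP V → LP V),
      blk 0 = j₀ ∧ (∀ n, blk n < blk (n + 1)) ∧ (∀ s, Emb 0 s = s) ∧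
      (∀ n, ∀ s ∈ Vars (X.F j₀), Emb n s ∈ Vars (X.F (blk n))) ∧
      (∀ n, ∀ s ∈ Vars (X.F j₀), lpLE (Emb n s) (Emb (n + 1) s)) ∧
      (∀ n, ∀ s ∈ Vars (X.F j₀), ∀ s' ∈ Vars (X.F j₀), ∀ i, s.1 i = s'.1 i →
        (Emb n s).1 i = (Emb n s').1 i) := by
  set It : ℕ → ℕ × (LP V → LP V) := fun n => Nat.rec (j₀, id)
    (fun _ p => (((chain_step X p.1).choose.1), (chain_step X p.1).choose.2 ∘ p.2)) n with hIt
  have inv : ∀ n, (∀ s ∈ Vars (X.F j₀), (It n).2 s ∈ Vars (X.F (It n).1)) ∧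
      (∀ s ∈ Vars (X.F j₀), ∀ s' ∈ Vars (X.F j₀), ∀ i, s.1 i = s'.1 i →
        ((It n).2 s).1 i = ((It n).2 s').1 i) := by
    intro n
    induction n with
    | zero => exact ⟨fun s hs => hs, fun s _ s' _ i hi => hi⟩
    | succ n ih =>
      obtain ⟨ih1, ih2⟩ := ih
      have hc := (chain_step X (It n).1).choose_spec
      constructor
      · intro s hs
        exact (hc.2.1 _ (ih1 s hs)).1
      · intro s hs s' hs' i hi
        exact hc.2.2 _ (ih1 s hs) _ (ih1 s' hs') i (ih2 s hs s' hs' i hi)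
  exact ⟨fun n => (It n).1, fun n => (It n).2, rfl,
    fun n => (chain_step X (It n).1).choose_spec.1, fun s => rfl,
    fun n s hs => (inv n).1 s hs,
    fun n s hs => ((chain_step X (It n).1).choose_spec.2.1 _ ((inv n).1 s hs)).2,
    fun n => (inv n).2⟩

end Chain

section PickDefs

variable {Λ : Type} {d : ℕ} {V : Fin (d + 1) → TreeT}

open Classical in
/-- Choice of a chain preimage. -/
noncomputable def pickF (R : Set (LP V)) (Emb : ℕ → LP V → LP V) (N : ℕ) (s : LP V) :
    Option (Fin N × ↥R) :=
  if h : ∃ p : Fin N × ↥R, Emb p.1 p.2.1 = s then some h.choose else none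

lemma pickF_spec {R : Set (LP V)} {Emb : ℕ → LP V → LP V} {N : ℕ} {s : LP V}
    {p : Fin N × ↥R} (h : pickF R Emb N s = some p) : Emb p.1 p.2.1 = s := by
  unfold pickF at h
  split at h
  · rename_i hex
    rw [Option.some_inj] at h
    cases h
    exact hex.choose_spec
  · cases h

lemma pickF_ex {R : Set (LP V)} {Emb : ℕ → LP V → LP V} {N : ℕ} {s : LP V}
    (h : ∃ p : Fin N × ↥R, Emb p.1 p.2.1 = s) :
    ∃ p : Fin N × ↥R, pickF R Emb N s = some p ∧ Emb p.1 p.2.1 = s := by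
  refine ⟨h.choose, ?_, h.choose_spec⟩
  unfold pickF
  rw [dif_pos h]

/-- The variable/letter pattern of the merged word determined by a line. -/
noncomputable def rhoF (R : Set (LP V)) (Emb : ℕ → LP V → LP V) (N : ℕ)
    (idx : Fin N → Option (↥R → Λ)) (m : ℕ) (lam : Λ) (s : LP V) : Λ ⊕ LP V :=
  match pickF R Emb N s with
  | some p => match idx p.1 with
    | none => Sum.inr (Emb m p.2.1)
    | some cc => Sum.inl (cc p.2)
  | none => Sum.inl lam

/-- The letter pattern of a point of the line. -/
noncomputable def bptF (R : Set (LP V)) (Emb : ℕ → LP V → LP V) (N : ℕ)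
    (v : Fin N → (↥R → Λ)) (lam : Λ) (s : LP V) : Λ :=
  match pickF R Emb N s with
  | some p => v p.1 p.2
  | none => lam

lemma resolve_eq (R : Set (LP V)) (Emb : ℕ → LP V → LP V) (N : ℕ)
    (idx : Fin N → Option (↥R → Λ)) (m : ℕ) (lam : Λ) (α : LP V → Λ) (s : LP V) :
    Sum.elim Sum.inl (fun r : LP V => (Sum.inl (α r) : Λ ⊕ LP V)) (rhoF R Emb N idx m lam s)
      = Sum.inl (bptF R Emb N (fun n => (idx n).getD (fun r : ↥R => α (Emb m r.1))) lam s) := by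
  unfold rhoF bptF
  cases hp : pickF R Emb N s with
  | none => rfl
  | some p =>
    cases hidx : idx p.1 with
    | none => simp [hidx]
    | some cc => simp [hidx]

/-- Hales–Jewett, `Fin` version with explicit points. -/
lemma HJ_fin (A κ : Type) [Finite A] [Finite κ] :
    ∃ N : ℕ, ∀ C : (Fin N → A) → κ, ∃ l : Combinatorics.Line A (Fin N), ∃ c,
      ∀ x : A, C (fun n => (l.idxFun n).getD x) = c := by
  obtain ⟨ι, ιfin, hι⟩ := Combinatorics.Line.exists_mono_in_high_dimension A κ
  haveI := ιfin
  set e := Fintype.equivFin ι with he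
  refine ⟨Fintype.card ι, fun C => ?_⟩
  obtain ⟨l', c, hc⟩ := hι (fun v => C (fun j => v (e.symm j)))
  refine ⟨⟨fun j => l'.idxFun (e.symm j), ?_⟩, c, fun x => ?_⟩
  · obtain ⟨i, hi⟩ := l'.proper
    exact ⟨e i, by simp [hi]⟩
  · have heq : (fun j => (l'.idxFun (e.symm j)).getD x) = fun j => l' x (e.symm j) :=
      funext fun j => (Combinatorics.Line.coe_apply l' x (e.symm j)).symm
    have := hc x
    simp only at this ⊢
    rw [heq]
    exact this

end PickDefs

section Step

variable {Λ : Type} {d : ℕ} {V : Fin (d + 1) → TreeT}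

lemma wunion_vword {w g : WordFun Λ V} {a b c : ℕ} (hwc : IsConst w) (hab : a ≤ b)
    (hwOn : IsWordOn w a b) (hgv : IsVWord g b c) :
    IsVWord (wunion w g) a c ∧ Vars (wunion w g) = Vars g := by
  have hbc : b ≤ c := by
    obtain ⟨s, hs⟩ := hgv.2.1
    have h1 := (hgv.2.2.2.2.1 s hs).1
    have h2 : (g s).isSome := by rw [h1]; rfl
    have := (hgv.1 s).1 h2
    omega
  have hocc : ∀ s, occSet (wunion w g) s = occSet g s := by
    intro s
    ext t
    constructor
    · intro ht
      have ht' : wunion w g t = some (Sum.inr s) := ht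
      unfold wunion at ht'
      cases hw : w t with
      | none => rw [hw] at ht'; exact ht'
      | some x =>
        rw [hw] at ht'
        simp only at ht'
        rw [ht'] at hw
        exact absurd hw (hwc t s)
    · intro ht
      have ht' : g t = some (Sum.inr s) := ht
      have hgs : (g t).isSome := by rw [ht']; rfl
      have hlev := (hgv.1 t).1 hgs
      have hwn : w t = none := by
        rw [← Option.not_isSome_iff_eq_none]
        intro hws
        have := (hwOn t).1 hws
        omega
      show wunion w g t = some (Sum.inr s)
      rw [wunion_none_left _ _ _ hwn]
      exact ht'
  have hvars : Vars (wunion w g) = Vars g := by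
    ext s
    constructor
    · rintro ⟨t, ht⟩
      have : t ∈ occSet (wunion w g) s := ht
      rw [hocc s] at this
      exact ⟨t, this⟩
    · rintro ⟨t, ht⟩
      have : t ∈ occSet g s := ht
      rw [← hocc s] at this
      exact ⟨t, this⟩
  obtain ⟨hOn, hne, hlev, hex, hmin, hls⟩ := hgv
  refine ⟨⟨?_, ?_, ?_, ?_, ?_, ?_⟩, hvars⟩
  · intro t
    unfold wunion
    cases hw : w t with
    | none =>
      have hwn : ¬ (a ≤ lev t ∧ lev t < b) := by
        intro hcon
        have := (hwOn t).2 hcon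
        rw [hw] at this
        simp at this
      constructor
      · intro hs
        have := (hOn t).1 hs
        omega
      · intro hs
        refine (hOn t).2 ⟨?_, hs.2⟩
        rcases Nat.lt_or_ge (lev t) b with h | h
        · omega
        · exact h
    | some x =>
      have := (hwOn t).1 (by rw [hw]; rfl)
      simp only [Option.isSome_some, true_iff]
      omega
  · rw [hvars]; exact hne
  · rw [hvars]; exact hlev
  · rw [hvars]; exact hex
  · rw [hvars]
    intro s hs
    rw [hocc s]
    exact hmin s hs
  · rw [hvars]
    intro s hs s' hs'
    rw [hocc s, hocc s']
    exact hls s hs s' hs'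

lemma step_main [Finite Λ] [Nonempty Λ] {kX ℓ k : ℕ}
    (X : SubspaceS Λ V kX ℓ) (E : Set (WordFun Λ V))
    (hcon : ¬ ∃ m n f, IsVWord f m n ∧ spanWord f ⊆ E ∩ spanSeq X.F ∧
      DominatesLevel V (Vars f) k)
    (q P : ℕ) (W : Set (WordFun Λ V)) (hWfin : W.Finite)
    (hW : ∀ w ∈ W, ∃ β : LP V → Λ, w = substW (unionMany X.F P) β) :
    ∃ r : ℕ × WordFun Λ V, P < r.1 ∧ IsVWord r.2 (X.e P) (X.e r.1) ∧
      DominatesLevel V (Vars r.2) q ∧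
      (∀ α : LP V → Λ, ∃ β : LP V → Λ,
        substW r.2 α = Restr (X.e P) (substW (unionMany X.F r.1) β)) ∧
      (∀ w ∈ W, ∀ α : LP V → Λ, wunion w (substW r.2 α) ∉ E) := by
  classical
  set j₀ := P + k + q + 1 with hj₀
  obtain ⟨blk, Emb, hblk0, hblkmono, hEmb0, hEmbmem, hEmbpref, hEmbcoord⟩ := chain X j₀
  set VR0 := Vars (X.F j₀) with hVR0
  haveI : Finite ↥VR0 := (vars_finite (X.vword j₀)).to_subtype
  haveI : Finite ↥W := hWfin.to_subtype
  obtain ⟨N, hN⟩ := HJ_fin (↥VR0 → Λ) (↥W → Bool)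
  -- chain facts
  have blk_lt : ∀ {a b : ℕ}, a < b → blk a < blk b := by
    intro a b hab
    induction b with
    | zero => omega
    | succ b ih =>
      rcases Nat.lt_or_ge a b with h | h
      · exact lt_trans (ih h) (hblkmono b)
      · have : a = b := by omega
        subst this
        exact hblkmono a
  have blk_le : ∀ {a b : ℕ}, a ≤ b → blk a ≤ blk b := by
    intro a b hab
    rcases Nat.lt_or_ge a b with h | h
    · exact le_of_lt (blk_lt h)
    · have : a = b := by omega
      subst this; exact le_refl _
  have blk_inj : ∀ {a b : ℕ}, blk a = blk b → a = b := by
    intro a b hab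
    rcases Nat.lt_trichotomy a b with h | h | h
    · exact absurd hab (ne_of_lt (blk_lt h))
    · exact h
    · exact absurd hab.symm (ne_of_lt (blk_lt h))
  have emb_le : ∀ (a b : ℕ), a ≤ b → ∀ s, s ∈ VR0 → lpLE (Emb a s) (Emb b s) := by
    intro a b hab s hs
    induction b with
    | zero =>
      have : a = 0 := by omega
      subst this
      exact fun i => List.prefix_refl _
    | succ b ih =>
      rcases Nat.lt_or_ge a (b+1) with h | h
      · exact lpLE_trans (ih (by omega)) (hEmbpref b s hs)
      · have : a = b + 1 := by omega
        subst this
        exact fun i => List.prefix_refl _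
  have emb_lev_eq : ∀ (n : ℕ) s, s ∈ VR0 → ∀ s', s' ∈ VR0 → lev (Emb n s) = lev (Emb n s') :=
    fun n s hs s' hs' => vars_same_lev (X.vword (blk n)) (hEmbmem n s hs) (hEmbmem n s' hs')
  have trunc : ∀ (a b : ℕ), a ≤ b → ∀ s, s ∈ VR0 → ∀ s', s' ∈ VR0 →
      Emb b s = Emb b s' → Emb a s = Emb a s' := by
    intro a b hab s hs s' hs' hbb
    refine Subtype.ext (funext fun i => ?_)
    refine prefix_eq_of_length (L := (Emb b s).1 i) (emb_le a b hab s hs i) ?_ ?_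
    · rw [hbb]; exact emb_le a b hab s' hs' i
    · rw [lenCoord, lenCoord]
      exact emb_lev_eq a s hs s' hs'
  have emb_idx_inj : ∀ (a b : ℕ) s, s ∈ VR0 → ∀ s', s' ∈ VR0 →
      Emb a s = Emb b s' → a = b := by
    intro a b s hs s' hs' h
    refine blk_inj (vars_block_unique X (hEmbmem a s hs) ?_)
    rw [h]
    exact hEmbmem b s' hs'
  -- the coloring
  set lam : Λ := Classical.arbitrary Λ with hlam
  set χ : (Fin N → (↥VR0 → Λ)) → (↥W → Bool) := fun v w =>
    decide (wunion w.1 (Restr (X.e P) (substW (unionMany X.F (blk N))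
      (bptF VR0 Emb N v lam))) ∈ E) with hχ
  obtain ⟨l, c, hc⟩ := hN χ
  set B := blk N with hB
  have hPj₀ : P < j₀ := by omega
  have hPB : P < B := lt_of_lt_of_le (hblk0 ▸ hPj₀) (hblk0 ▸ blk_le (Nat.zero_le N))
  -- wildcard coordinates
  set wild : Finset (Fin N) := Finset.univ.filter (fun n => l.idxFun n = none) with hwild
  have hwne : wild.Nonempty := by
    obtain ⟨i, hi⟩ := l.proper
    exact ⟨i, Finset.mem_filter.2 ⟨Finset.mem_univ i, hi⟩⟩
  set m : Fin N := wild.min' hwne with hm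
  have hm_none : l.idxFun m = none := (Finset.mem_filter.1 (wild.min'_mem hwne)).2
  have hm_min : ∀ n : Fin N, l.idxFun n = none → m ≤ n := by
    intro n hn
    exact wild.min'_le n (Finset.mem_filter.2 ⟨Finset.mem_univ n, hn⟩)
  -- the word
  set ρ : LP V → Λ ⊕ LP V := rhoF VR0 Emb N l.idxFun (m : ℕ) lam with hρ
  set U : WordFun Λ V := Restr (X.e P) (unionMany X.F B) with hU
  set g : WordFun Λ V := fun t => (U t).map (Sum.elim Sum.inl ρ) with hg
  -- U facts
  have hU_eq : ∀ {j : ℕ} {t : LP V}, P ≤ j → j < B → X.e j ≤ lev t → lev t < X.e (j+1) →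
      U t = X.F j t := by
    intro j t h1 h2 h3 h4
    rw [hU]
    unfold Restr
    rw [if_pos (le_trans (e_mono X h1) h3)]
    exact UM_eq X h2 h3 h4
  have hU_some : ∀ t : LP V, (U t).isSome ↔ (X.e P ≤ lev t ∧ lev t < X.e B) := by
    intro t
    rw [hU]; unfold Restr
    by_cases h : X.e P ≤ lev t
    · rw [if_pos h, UM_isSome X]
      constructor
      · rintro ⟨h1, h2⟩; exact ⟨h, h2⟩
      · rintro ⟨h1, h2⟩; exact ⟨le_trans (e_zero_le X P) h, h2⟩
    · rw [if_neg h]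
      simp only [Option.isSome_none, Bool.false_eq_true, false_iff]
      intro hcontra
      exact h hcontra.1
  have hU_occ : ∀ {t s : LP V}, U t = some (Sum.inr s) →
      ∃ j, P ≤ j ∧ j < B ∧ s ∈ Vars (X.F j) ∧ X.F j t = some (Sum.inr s) := by
    intro t s hts
    have hsome : (U t).isSome := by rw [hts]; rfl
    obtain ⟨hP', hB'⟩ := (hU_some t).1 hsome
    obtain ⟨j, hj, h1, h2⟩ := blockOf X (le_trans (e_zero_le X P) hP') hB'
    have hPj : P ≤ j := by
      by_contra hcontra
      have := e_mono X (show j + 1 ≤ P by omega)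
      omega
    have heq := hU_eq hPj hj h1 h2
    rw [heq] at hts
    exact ⟨j, hPj, hj, ⟨t, hts⟩, hts⟩
  have hblkrange : ∀ n : Fin N, P ≤ blk (n:ℕ) ∧ blk (n:ℕ) < B := by
    intro n
    constructor
    · calc P ≤ j₀ := by omega
        _ = blk 0 := hblk0.symm
        _ ≤ blk (n:ℕ) := blk_le (Nat.zero_le _)
    · exact blk_lt n.isLt
  have hself : ∀ (n : Fin N) (r : ↥VR0),
      U (Emb (n:ℕ) r.1) = some (Sum.inr (Emb (n:ℕ) r.1)) := by
    intro n r
    have hmem := hEmbmem (n:ℕ) r.1 r.2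
    have hocc := (X.vword (blk (n:ℕ))).2.2.2.2.1 _ hmem
    have hl := mem_vars_lev X hmem
    rw [hU_eq (hblkrange n).1 (hblkrange n).2 hl.1 hl.2]
    exact hocc.1
  have pick_emb : ∀ (n : Fin N) (r : ↥VR0), ∃ r' : ↥VR0,
      pickF VR0 Emb N (Emb (n:ℕ) r.1) = some (n, r') ∧ Emb (n:ℕ) r'.1 = Emb (n:ℕ) r.1 := by
    intro n r
    obtain ⟨p, hp, hpe⟩ := pickF_ex (s := Emb (n:ℕ) r.1) ⟨(n, r), rfl⟩
    obtain ⟨p1, p2⟩ := p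
    have hp1 : p1 = n := Fin.ext (emb_idx_inj _ _ _ p2.2 _ r.2 hpe)
    subst hp1
    exact ⟨p2, hp, hpe⟩
  have hρ_var : ∀ (s : LP V) (p : Fin N × ↥VR0), pickF VR0 Emb N s = some p →
      l.idxFun p.1 = none → ρ s = Sum.inr (Emb (m:ℕ) p.2.1) := by
    intro s p hp hidx
    simp only [hρ, rhoF, hp, hidx]
  have hρ_let : ∀ (s : LP V) (p : Fin N × ↥VR0) (cc : ↥VR0 → Λ), pickF VR0 Emb N s = some p →
      l.idxFun p.1 = some cc → ρ s = Sum.inl (cc p.2) := by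
    intro s p cc hp hidx
    simp only [hρ, rhoF, hp, hidx]
  have hg_occ : ∀ {t r : LP V}, g t = some (Sum.inr r) ↔
      ∃ s, U t = some (Sum.inr s) ∧ ρ s = Sum.inr r := by
    intro t r
    constructor
    · intro h
      have h' : (U t).map (Sum.elim Sum.inl ρ) = some (Sum.inr r) := h
      cases hUt : U t with
      | none => rw [hUt] at h'; simp at h'
      | some val =>
        rw [hUt] at h'
        simp only [Option.map_some] at h'
        cases val with
        | inl b => simp at h'
        | inr s =>
          simp only [Sum.elim_inr] at h'
          rw [Option.some_inj] at h'
          exact ⟨s, rfl, h'⟩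
    · rintro ⟨s, hUt, hρs⟩
      show (U t).map (Sum.elim Sum.inl ρ) = some (Sum.inr r)
      rw [hUt]
      simp [hρs]
  have hρ_shape : ∀ {s r : LP V}, ρ s = Sum.inr r →
      ∃ p : Fin N × ↥VR0, pickF VR0 Emb N s = some p ∧ l.idxFun p.1 = none ∧
        r = Emb (m:ℕ) p.2.1 ∧ Emb (p.1:ℕ) p.2.1 = s := by
    intro s r hρs
    rw [hρ] at hρs
    cases hp : pickF VR0 Emb N s with
    | none =>
      simp only [rhoF, hp] at hρs
      cases hρs
    | some p =>
      cases hidx : l.idxFun p.1 with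
      | none =>
        simp only [rhoF, hp, hidx] at hρs
        exact ⟨p, rfl, hidx, (Sum.inr.inj hρs).symm, pickF_spec hp⟩
      | some cc =>
        simp only [rhoF, hp, hidx] at hρs
        cases hρs
  have hg_at_emb : ∀ r' : ↥VR0, g (Emb (m:ℕ) r'.1) = some (Sum.inr (Emb (m:ℕ) r'.1)) := by
    intro r'
    obtain ⟨r'', hp, he⟩ := pick_emb m r'
    show (U (Emb (m:ℕ) r'.1)).map (Sum.elim Sum.inl ρ) = some (Sum.inr (Emb (m:ℕ) r'.1))
    rw [hself m r']
    simp only [Option.map_some, Sum.elim_inr]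
    rw [hρ_var _ _ hp hm_none]
    rw [Option.some_inj]
    exact congrArg Sum.inr he
  have hVars_mem : ∀ r' : ↥VR0, Emb (m:ℕ) r'.1 ∈ Vars g := fun r' => ⟨_, hg_at_emb r'⟩
  have hVars_char : ∀ r : LP V, r ∈ Vars g → ∃ r' : ↥VR0, r = Emb (m:ℕ) r'.1 := by
    rintro r ⟨t, ht⟩
    obtain ⟨s, hUt, hρs⟩ := hg_occ.1 ht
    obtain ⟨p, hp, hidx, hr, hs⟩ := hρ_shape hρs
    exact ⟨p.2, hr⟩
  have hVR0ne : VR0.Nonempty := (X.vword j₀).2.1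
  obtain ⟨r₀v, hr₀v⟩ := hVR0ne
  have hgOn : IsWordOn g (X.e P) (X.e B) := by
    intro t
    have hh : (g t).isSome = (U t).isSome := by
      show ((U t).map (Sum.elim Sum.inl ρ)).isSome = (U t).isSome
      cases U t <;> rfl
    rw [hh]
    exact hU_some t
  have hmin : ∀ r ∈ Vars g, r ∈ occSet g r ∧ ∀ t ∈ occSet g r, lpLE r t := by
    intro r hr
    obtain ⟨r', rfl⟩ := hVars_char r hr
    refine ⟨hg_at_emb r', fun t ht => ?_⟩
    obtain ⟨s, hUt, hρs⟩ := hg_occ.1 ht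
    obtain ⟨p, hp, hidx, hre, hse⟩ := hρ_shape hρs
    have hmn : (m : ℕ) ≤ (p.1 : ℕ) := hm_min p.1 hidx
    have h1 : lpLE (Emb (m:ℕ) p.2.1) (Emb (p.1:ℕ) p.2.1) := emb_le _ _ hmn p.2.1 p.2.2
    rw [hse] at h1
    obtain ⟨j, hPj, hjB, hsv, hft⟩ := hU_occ hUt
    have h2 := ((X.vword j).2.2.2.2.1 s hsv).2 t hft
    rw [hre]
    exact lpLE_trans h1 h2
  have hlev3 : ∀ r ∈ Vars g, ∀ r'' ∈ Vars g, lev r = lev r'' := by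
    intro r hr r'' hr''
    obtain ⟨a, rfl⟩ := hVars_char r hr
    obtain ⟨b, rfl⟩ := hVars_char r'' hr''
    exact emb_lev_eq (m:ℕ) a.1 a.2 b.1 b.2
  have hexg : ∀ r ∈ Vars g, ∀ r'' ∈ Vars g, ∀ i₀ : Fin (d+1),
      ∃ s'' ∈ Vars g, (∀ i, i ≠ i₀ → s''.1 i = r.1 i) ∧ s''.1 i₀ = r''.1 i₀ := by
    intro r hr r'' hr'' i₀
    obtain ⟨a, rfl⟩ := hVars_char r hr
    obtain ⟨b, rfl⟩ := hVars_char r'' hr''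
    obtain ⟨w, hwv, hw1, hw2⟩ := (X.vword j₀).2.2.2.1 a.1 a.2 b.1 b.2 i₀
    refine ⟨Emb (m:ℕ) w, hVars_mem ⟨w, hwv⟩, fun i hi => ?_, ?_⟩
    · exact hEmbcoord (m:ℕ) w hwv a.1 a.2 i (hw1 i hi)
    · exact hEmbcoord (m:ℕ) w hwv b.1 b.2 i₀ hw2
  have key6 : ∀ r' : ↥VR0, levSet (occSet g (Emb (m:ℕ) r'.1)) =
      {x | ∃ n : Fin N, l.idxFun n = none ∧
        x ∈ levSet (occSet (X.F (blk (n:ℕ))) (Emb (n:ℕ) r₀v))} := by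
    intro r'
    ext x
    constructor
    · rintro ⟨t, ht, rfl⟩
      obtain ⟨s, hUt, hρs⟩ := hg_occ.1 ht
      obtain ⟨p, hp, hidx, hre, hse⟩ := hρ_shape hρs
      obtain ⟨j, hPj, hjB, hsv, hft⟩ := hU_occ hUt
      have hsmem : s ∈ Vars (X.F (blk (p.1:ℕ))) := by
        rw [← hse]
        exact hEmbmem (p.1:ℕ) p.2.1 p.2.2
      have hjb : j = blk (p.1:ℕ) := vars_block_unique X hsv hsmem
      refine ⟨p.1, hidx, ?_⟩
      have hc6 := (X.vword (blk (p.1:ℕ))).2.2.2.2.2 s hsmem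
        (Emb (p.1:ℕ) r₀v) (hEmbmem _ r₀v hr₀v)
      rw [← hc6]
      refine ⟨t, ?_, rfl⟩
      show X.F (blk (p.1:ℕ)) t = some (Sum.inr s)
      rw [← hjb]
      exact hft
    · rintro ⟨n, hn, hx⟩
      have hc6 := (X.vword (blk (n:ℕ))).2.2.2.2.2 (Emb (n:ℕ) r₀v) (hEmbmem _ _ hr₀v)
        (Emb (n:ℕ) r'.1) (hEmbmem _ _ r'.2)
      rw [hc6] at hx
      obtain ⟨t, ht, rfl⟩ := hx
      refine ⟨t, ?_, rfl⟩
      show g t = some (Sum.inr (Emb (m:ℕ) r'.1))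
      apply hg_occ.2
      refine ⟨Emb (n:ℕ) r'.1, ?_, ?_⟩
      · have hsome : (X.F (blk (n:ℕ)) t).isSome := by
          rw [show X.F (blk (n:ℕ)) t = some (Sum.inr (Emb (n:ℕ) r'.1)) from ht]; rfl
        have hl := ((X.vword (blk (n:ℕ))).1 t).1 hsome
        rw [hU_eq (hblkrange n).1 (hblkrange n).2 hl.1 hl.2]
        exact ht
      · obtain ⟨r'', hp, he⟩ := pick_emb n r'
        rw [hρ_var _ _ hp hn]
        exact congrArg Sum.inr
          (trunc (m:ℕ) (n:ℕ) (hm_min n hn) r''.1 r''.2 r'.1 r'.2 he)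
  have hgvw : IsVWord g (X.e P) (X.e B) := by
    refine ⟨hgOn, ⟨_, hVars_mem ⟨r₀v, hr₀v⟩⟩, hlev3, hexg, hmin, ?_⟩
    intro r hr r'' hr''
    obtain ⟨a, rfl⟩ := hVars_char r hr
    obtain ⟨b, rfl⟩ := hVars_char r'' hr''
    rw [key6 a, key6 b]
  have hdomg : ∀ k', k' ≤ kX + j₀ → DominatesLevel V (Vars g) k' := by
    intro k' hk' i u hu hlen
    obtain ⟨s, hsv, hus⟩ := dominates_mono (X.dom j₀) hk' i u hu hlen
    refine ⟨Emb (m:ℕ) s, hVars_mem ⟨s, hsv⟩, ?_⟩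
    have hpre := emb_le 0 (m:ℕ) (Nat.zero_le _) s hsv i
    have hid : Emb 0 s = s := hEmb0 s
    rw [hid] at hpre
    exact hus.trans hpre
  -- instance formula: substitution instances of `g` are points of the line
  have hinst : ∀ α : LP V → Λ, substW g α =
      Restr (X.e P) (substW (unionMany X.F B) (bptF VR0 Emb N
        (fun n => (l.idxFun n).getD (fun r : ↥VR0 => α (Emb (m:ℕ) r.1))) lam)) := by
    intro α
    funext t
    have hLHS : substW g α t = (U t).map
        (fun v => Sum.elim Sum.inl (fun s : LP V => (Sum.inl (α s) : Λ ⊕ LP V))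
          (Sum.elim Sum.inl ρ v)) := by
      show ((U t).map (Sum.elim Sum.inl ρ)).map _ = _
      rw [Option.map_map]
      rfl
    rw [hLHS]
    unfold Restr
    by_cases h : X.e P ≤ lev t
    · rw [if_pos h]
      have hUt : U t = unionMany X.F B t := by
        rw [hU]; unfold Restr; rw [if_pos h]
      rw [hUt]
      unfold substW
      cases hUv : unionMany X.F B t with
      | none => rfl
      | some val =>
        cases val with
        | inl b => rfl
        | inr s =>
          simp only [Option.map_some, Sum.elim_inr]
          rw [Option.some_inj]
          rw [hρ]
          exact resolve_eq VR0 Emb N l.idxFun (m:ℕ) lam α s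
    · rw [if_neg h]
      have hUt : U t = none := by rw [hU]; unfold Restr; rw [if_neg h]
      rw [hUt]
      rfl
  -- relation to the coloring
  have hχ_spec : ∀ (α : LP V → Λ) (w : ↥W),
      (wunion w.1 (substW g α) ∈ E) = (c w = true) := by
    intro α w
    have hx := congrFun (hc (fun r : ↥VR0 => α (Emb (m:ℕ) r.1))) w
    rw [hχ] at hx
    simp only at hx
    rw [hinst α]
    rw [← hx]
    simp [decide_eq_true_eq]
  -- the constant part of elements of W
  have hWconst : ∀ w ∈ W, IsConst w ∧ IsWordOn w ℓ (X.e P) := by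
    intro w hw
    obtain ⟨β, rfl⟩ := hW w hw
    refine ⟨substW_isConst _ _, fun t => ?_⟩
    rw [substW_isSome]
    exact UM_isSome X
  by_cases hwin : ∃ w : ↥W, c w = true
  · -- the win case: contradicts hcon
    exfalso
    apply hcon
    obtain ⟨w, hcw⟩ := hwin
    have hwW := w.2
    obtain ⟨hwconst, hwOn⟩ := hWconst w.1 hwW
    obtain ⟨hvw, hveq⟩ := wunion_vword hwconst (e_zero_le X P) hwOn hgvw
    refine ⟨ℓ, X.e B, wunion w.1 g, hvw, ?_, ?_⟩
    · rintro x ⟨α, rfl⟩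
      have hsw : substW (wunion w.1 g) α = wunion w.1 (substW g α) := by
        rw [substW_wunion, substW_const_eq hwconst]
      constructor
      · rw [hsw]
        have := hχ_spec α w
        rw [hcw] at this
        simp only [eq_iff_iff, iff_true] at this
        exact this
      · -- span membership
        rw [hsw]
        obtain ⟨β, hβ⟩ := hW w.1 hwW
        rw [hβ, hinst α, merge_eq X (le_of_lt hPB) β _]
        refine Set.mem_biUnion (show 0 < B by omega) ?_
        exact substW_mem_spanFin X.F B _
    · rw [hveq]
      exact hdomg k (by omega)
  · have hfalse : ∀ w : ↥W, c w = false := by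
      intro w
      cases hcw : c w with
      | false => rfl
      | true => exact absurd ⟨w, hcw⟩ hwin
    refine ⟨(B, g), hPB, hgvw, hdomg q (by omega), ?_, ?_⟩
    · intro α
      exact ⟨_, hinst α⟩
    · intro w hw α hEmem
      have hh := hχ_spec α ⟨w, hw⟩
      rw [hfalse ⟨w, hw⟩] at hh
      simp only [eq_iff_iff, Bool.false_eq_true, iff_false] at hh
      exact hh hEmem

end Step
/-- **Getting inside a large set.** If `E ⊆ W(ℓ)` is large in the `ℓ`-subspace `X`, then
for every `k` there exists a variable word `f` with `[f]_Λ ⊆ E ∩ [X]_Λ` whose variable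
support `ws(f)` dominates `T(k)`. -/
theorem stmt8 {d : ℕ} (Λ : Type) [Finite Λ] (V : Fin (d + 1) → TreeT)
    (k ℓ : ℕ) (kX : ℕ) (X : SubspaceS Λ V kX ℓ)
    (E : Set (WordFun Λ V)) (hEW : E ⊆ Wl Λ V ℓ) (hE : LargeIn E X) :
    ∃ (m n : ℕ) (f : WordFun Λ V),
      IsVWord f m n ∧
      spanWord f ⊆ E ∩ spanSeq X.F ∧
      DominatesLevel V (Vars f) k := by
  classical
  rcases isEmpty_or_nonempty Λ with hΛ | hΛ
  · refine ⟨X.e k, X.e (k+1), X.F k, X.vword k, ?_, dominates_mono (X.dom k) (by omega)⟩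
    rintro x ⟨a, rfl⟩
    exact (hΛ.false (a (rootLP V))).elim
  by_contra hcon
  have hstep := step_main X E hcon
  -- the avoiding subspace, built recursively
  set pick1 : ℕ → ℕ → Set (WordFun Λ V) → (ℕ × WordFun Λ V) := fun q P W =>
    if h : W.Finite ∧ (∀ w ∈ W, ∃ β, w = substW (unionMany X.F P) β)
    then (hstep q P W h.1 h.2).choose else (P+1, X.F P) with hpick1
  set St : ℕ → ℕ × (ℕ → WordFun Λ V) := fun q => Nat.rec ((0 : ℕ), fun _ => X.F 0)
    (fun q' s => ((pick1 q' s.1 (spanFin s.2 q')).1,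
      fun i => if i = q' then (pick1 q' s.1 (spanFin s.2 q')).2 else s.2 i)) q with hStdef
  set Yf : ℕ → WordFun Λ V := fun q => (St (q+1)).2 q with hYf
  set Pf : ℕ → ℕ := fun q => (St q).1 with hPf
  have hSt_succ : ∀ q, St (q+1) = ((pick1 q (St q).1 (spanFin (St q).2 q)).1,
      fun i => if i = q then (pick1 q (St q).1 (spanFin (St q).2 q)).2 else (St q).2 i) :=
    fun q => rfl
  have hSt_lt : ∀ (a q : ℕ), a < q → (St q).2 a = Yf a := by
    intro a q
    induction q with
    | zero => omega
    | succ q ih =>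
      intro haq
      rcases eq_or_ne a q with rfl | hne
      · rfl
      · have h1 : (St (q+1)).2 a = (St q).2 a := by
          rw [hSt_succ q]
          simp only [if_neg hne]
        rw [h1]
        exact ih (by omega)
  have hF1 : ∀ q, spanFin (St q).2 q = spanFin Yf q :=
    fun q => spanFin_congr (fun i hi => hSt_lt i q hi)
  -- facts about each recursion step
  have facts : ∀ q, ((spanFin Yf q).Finite ∧
      (∀ w ∈ spanFin Yf q, ∃ β, w = substW (unionMany X.F (Pf q)) β)) →
      (Pf q < Pf (q+1) ∧ IsVWord (Yf q) (X.e (Pf q)) (X.e (Pf (q+1))) ∧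
        DominatesLevel V (Vars (Yf q)) q ∧
        (∀ α : LP V → Λ, ∃ β : LP V → Λ, substW (Yf q) α
          = Restr (X.e (Pf q)) (substW (unionMany X.F (Pf (q+1))) β)) ∧
        (∀ w ∈ spanFin Yf q, ∀ α : LP V → Λ, wunion w (substW (Yf q) α) ∉ E)) := by
    intro q hGood
    have hcond : (spanFin (St q).2 q).Finite ∧
        (∀ w ∈ spanFin (St q).2 q, ∃ β, w = substW (unionMany X.F ((St q).1)) β) := by
      rw [hF1 q]
      exact hGood
    have hpick : pick1 q (St q).1 (spanFin (St q).2 q)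
        = (hstep q (St q).1 (spanFin (St q).2 q) hcond.1 hcond.2).choose := by
      rw [hpick1]
      exact dif_pos hcond
    have hspec := (hstep q (St q).1 (spanFin (St q).2 q) hcond.1 hcond.2).choose_spec
    have hP1 : Pf (q+1) = (hstep q (St q).1 (spanFin (St q).2 q) hcond.1 hcond.2).choose.1 := by
      show (St (q+1)).1 = _
      rw [hSt_succ q, hpick]
    have hY : Yf q = (hstep q (St q).1 (spanFin (St q).2 q) hcond.1 hcond.2).choose.2 := by
      show (St (q+1)).2 q = _
      rw [hSt_succ q]
      show (if q = q then (pick1 q (St q).1 (spanFin (St q).2 q)).2 else (St q).2 q) = _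
      rw [if_pos rfl, hpick]
    obtain ⟨hs1, hs2, hs3, hs4, hs5⟩ := hspec
    refine ⟨?_, ?_, ?_, ?_, ?_⟩
    · rw [hP1]; exact hs1
    · rw [hP1, hY]; exact hs2
    · rw [hY]; exact hs3
    · intro α
      obtain ⟨β, hβ⟩ := hs4 α
      exact ⟨β, by rw [hY, hP1]; exact hβ⟩
    · intro w hw α
      rw [hY]
      exact hs5 w (by rw [hF1 q]; exact hw) α
  have good : ∀ q, (spanFin Yf q).Finite ∧
      (∀ w ∈ spanFin Yf q, ∃ β, w = substW (unionMany X.F (Pf q)) β) := by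
    intro q
    induction q with
    | zero =>
      rw [spanFin_zero]
      constructor
      · exact Set.finite_singleton _
      · rintro w rfl
        refine ⟨fun _ => Classical.arbitrary Λ, ?_⟩
        funext t
        rfl
    | succ q ih =>
      obtain ⟨hf1, hf2, hf3, hf4, hf5⟩ := facts q ih
      constructor
      · have hsub : spanFin Yf (q+1) ⊆
            (fun p : WordFun Λ V × WordFun Λ V => wunion p.1 p.2) ''
              (spanFin Yf q ×ˢ spanWord (Yf q)) := by
          intro w hw
          obtain ⟨w', hw', a, rfl⟩ := spanFin_decomp hw
          exact ⟨(w', substW (Yf q) a), ⟨hw', a, rfl⟩, rfl⟩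
        exact ((ih.1.prod (spanWord_finite (vars_finite hf2))).image _).subset hsub
      · intro w hw
        obtain ⟨w', hw', a, rfl⟩ := spanFin_decomp hw
        obtain ⟨βw, hβw⟩ := ih.2 w' hw'
        obtain ⟨β', hβ'⟩ := hf4 a
        refine ⟨fun s => if lev s < X.e (Pf q) then βw s else β' s, ?_⟩
        rw [hβw, hβ']
        exact merge_eq X (le_of_lt hf1) βw β'
  have hPmono : ∀ q, q ≤ Pf q := by
    intro q
    induction q with
    | zero => exact Nat.zero_le _
    | succ q ih =>
      have := (facts q (good q)).1
      omega
  set Y : SubspaceS Λ V 0 ℓ :=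
    { F := Yf
      e := fun q => X.e (Pf q)
      e0 := by show X.e (Pf 0) = ℓ; exact X.e0
      vword := fun i => (facts i (good i)).2.1
      dom := fun i => by rw [Nat.zero_add]; exact (facts i (good i)).2.2.1 } with hY
  have hsubspan : spanSeq Y.F ⊆ spanSeq X.F := by
    intro w hw
    simp only [spanSeq, Set.mem_iUnion, Set.mem_setOf_eq] at hw
    obtain ⟨q, hq, hw'⟩ := hw
    have hw'' : w ∈ spanFin Yf q := hw'
    obtain ⟨β, hβ⟩ := (good q).2 w hw''
    have hmem : w ∈ spanFin X.F (Pf q) := by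
      rw [hβ]
      exact substW_mem_spanFin X.F (Pf q) β
    exact Set.mem_biUnion (show 0 < Pf q from lt_of_lt_of_le hq (hPmono q)) hmem
  obtain ⟨w, hwE, hwS⟩ := hE 0 Y hsubspan
  simp only [spanSeq, Set.mem_iUnion, Set.mem_setOf_eq] at hwS
  obtain ⟨q, hq, hw'⟩ := hwS
  cases q with
  | zero => omega
  | succ q =>
    have hw'' : w ∈ spanFin Yf (q+1) := hw'
    obtain ⟨w2, hw2, a, rfl⟩ := spanFin_decomp hw''
    exact (facts q (good q)).2.2.2.2 w2 hw2 a hwE
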